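/- Let X ⊆ ℝ^d be a nonempty compact convex set, Ω a set, I a countable index set, θ_i : Ω → Ω arbitrary maps, and p_i : Ω → [0,∞) with ∑_{i∈I} p_i(ω) = 1 for every ω ∈ Ω. For each ω ∈ Ω let g_ω : ℝ^d → ℝ^d be a C³ map with g_ω(X) ⊆ X, and suppose there is 0 ≤ λ < 1 such that the numbers L_k = sup_{ω∈Ω} sup_{x∈X} ‖D^k g_ω(x)‖ (k = 1,2,3) satisfy max{L₁ + L₂ + L₃, L₁² + 3·L₁·L₂, L₁³} ≤ λ. Let K be the sectional transfer operator (Kν)_ω = ∑_{i∈I} p_i(ω)·(g_{θ_i(ω)})_* ν_{θ_i(ω)}. Then for all sections σ, σ′ : Ω → M₁(X) and every D ≥ 0: if N₃(σ_θ, σ′_θ) ≤ D for every θ ∈ Ω, then N₃((Kσ)_ω, (Kσ′)_ω) ≤ λ·D for every ω ∈ Ω. -/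

import Mathlib

set_option maxSynthPendingDepth 2
set_option maxHeartbeats 1000000


open MeasureTheory
open ContinuousLinearMap

/-- `⨆_{x ∈ X} ‖D^j φ(x)‖`, the supremum over `X` of the norm of the `j`-th iterated
Fréchet derivative of `φ`. -/
noncomputable def supDerivOn {E : Type*} [NormedAddCommGroup E] [NormedSpace ℝ E]
    (X : Set E) (j : ℕ) (φ : E → ℝ) : ℝ :=
  ⨆ x ∈ X, ‖iteratedFDeriv ℝ j φ x‖

/-- The `C³`-dual seminorm distance between two finite Borel measures:
`N₃(σ,σ′) = sup { ∫ φ dσ − ∫ φ dσ′ : φ C³, ∑_{j=1}^{3} sup_{x∈X} ‖D^j φ(x)‖ ≤ 1 }`. -/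
noncomputable def N3 {E : Type*} [NormedAddCommGroup E] [NormedSpace ℝ E]
    [MeasurableSpace E] (X : Set E) (σ σ' : Measure E) : ℝ :=
  ⨆ φ : {φ : E → ℝ // ContDiff ℝ 3 φ ∧
      supDerivOn X 1 φ + supDerivOn X 2 φ + supDerivOn X 3 φ ≤ 1},
    (∫ x, φ.1 x ∂σ) - ∫ x, φ.1 x ∂σ'

/-- The sectional transfer operator (full-branch form):
`(Kν)_ω = ∑_{i∈I} p_i(ω) · (g_{θ_i(ω)})_* ν_{θ_i(ω)}`. -/
noncomputable def sectionalTransfer {Ω X I : Type*} [MeasurableSpace X]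
    (θ : I → Ω → Ω) (p : I → Ω → ℝ) (g : Ω → X → X)
    (ν : Ω → Measure X) (ω : Ω) : Measure X :=
  Measure.sum fun i => ENNReal.ofReal (p i ω) • ((ν (θ i ω)).map (g (θ i ω)))

section Core
variable {E : Type*} [NormedAddCommGroup E] [NormedSpace ℝ E]
 {F : Type*} [NormedAddCommGroup F] [NormedSpace ℝ F]

private lemma norm_fd1 (f : E → F) (x : E) : ‖fderiv ℝ f x‖ = ‖iteratedFDeriv ℝ 1 f x‖ := by
  rw [← norm_iteratedFDeriv_fderiv (n := 0), norm_iteratedFDeriv_zero]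

private lemma norm_fd2 (f : E → F) (x : E) :
    ‖fderiv ℝ (fderiv ℝ f) x‖ = ‖iteratedFDeriv ℝ 2 f x‖ := by
  rw [norm_fd1, norm_iteratedFDeriv_fderiv (n := 1)]

private lemma norm_fd3 (f : E → F) (x : E) :
    ‖fderiv ℝ (fderiv ℝ (fderiv ℝ f)) x‖ = ‖iteratedFDeriv ℝ 3 f x‖ := by
  rw [norm_fd1, norm_iteratedFDeriv_fderiv (n := 1), norm_iteratedFDeriv_fderiv (n := 2)]

private lemma norm_compL_app {G H K : Type*} [NormedAddCommGroup G] [NormedSpace ℝ G]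
    [NormedAddCommGroup H] [NormedSpace ℝ H]
    [NormedAddCommGroup K] [NormedSpace ℝ K] (c : H →L[ℝ] K) : ‖compL ℝ G H K c‖ ≤ ‖c‖ := by
  calc ‖compL ℝ G H K c‖ ≤ ‖compL ℝ G H K‖ * ‖c‖ := le_opNorm _ c
  _ ≤ 1 * ‖c‖ := mul_le_mul_of_nonneg_right (norm_compL_le _ _ _ _) (norm_nonneg c)
  _ = ‖c‖ := one_mul _

private lemma norm_compL_flip_app {G H K : Type*} [NormedAddCommGroup G] [NormedSpace ℝ G]
    [NormedAddCommGroup H] [NormedSpace ℝ H]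
    [NormedAddCommGroup K] [NormedSpace ℝ K] (d : G →L[ℝ] H) :
    ‖(compL ℝ G H K).flip d‖ ≤ ‖d‖ := by
  calc ‖(compL ℝ G H K).flip d‖ ≤ ‖(compL ℝ G H K).flip‖ * ‖d‖ := le_opNorm _ d
  _ ≤ 1 * ‖d‖ := by
    rw [opNorm_flip]
    exact mul_le_mul_of_nonneg_right (norm_compL_le _ _ _ _) (norm_nonneg d)
  _ = ‖d‖ := one_mul _

/-- Precise Faà di Bruno norm bounds for orders 1, 2, 3 for a composition `φ ∘ g`. -/
private lemma comp_deriv_bounds (φ : E → ℝ) (g : E → E)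
    (hφ : ContDiff ℝ 3 φ) (hg : ContDiff ℝ 3 g) (x : E) :
    ‖iteratedFDeriv ℝ 1 (φ ∘ g) x‖ ≤
        ‖iteratedFDeriv ℝ 1 φ (g x)‖ * ‖iteratedFDeriv ℝ 1 g x‖ ∧
    ‖iteratedFDeriv ℝ 2 (φ ∘ g) x‖ ≤
        ‖iteratedFDeriv ℝ 2 φ (g x)‖ * ‖iteratedFDeriv ℝ 1 g x‖ ^ 2 +
        ‖iteratedFDeriv ℝ 1 φ (g x)‖ * ‖iteratedFDeriv ℝ 2 g x‖ ∧
    ‖iteratedFDeriv ℝ 3 (φ ∘ g) x‖ ≤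
        ‖iteratedFDeriv ℝ 3 φ (g x)‖ * ‖iteratedFDeriv ℝ 1 g x‖ ^ 3 +
        3 * ‖iteratedFDeriv ℝ 2 φ (g x)‖ * ‖iteratedFDeriv ℝ 1 g x‖ * ‖iteratedFDeriv ℝ 2 g x‖ +
        ‖iteratedFDeriv ℝ 1 φ (g x)‖ * ‖iteratedFDeriv ℝ 3 g x‖ := by
  set A : E → E →L[ℝ] E := fderiv ℝ g with hAdef
  set A₂ : E → E →L[ℝ] E →L[ℝ] E := fderiv ℝ A with hA2def
  set A₃ := fderiv ℝ A₂ with hA3def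
  set B : E → E →L[ℝ] ℝ := fderiv ℝ φ with hBdef
  set B₂ : E → E →L[ℝ] E →L[ℝ] ℝ := fderiv ℝ B with hB2def
  set B₃ := fderiv ℝ B₂ with hB3def
  have hφ1 : Differentiable ℝ φ := hφ.differentiable (by norm_num)
  have hg1 : Differentiable ℝ g := hg.differentiable (by norm_num)
  have hB : ContDiff ℝ 2 B := hφ.fderiv_right (by norm_num)
  have hA : ContDiff ℝ 2 A := hg.fderiv_right (by norm_num)
  have hBB : ContDiff ℝ 1 B₂ := hB.fderiv_right (by norm_num)
  have hAA : ContDiff ℝ 1 A₂ := hA.fderiv_right (by norm_num)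
  have hA_at : ∀ y, HasFDerivAt A (A₂ y) y := fun y =>
    (hA.differentiable (by norm_num) y).hasFDerivAt
  have hA2_at : ∀ y, HasFDerivAt A₂ (A₃ y) y := fun y =>
    (hAA.differentiable (by norm_num) y).hasFDerivAt
  have hBg : ∀ y, HasFDerivAt (fun z => B (g z)) ((B₂ (g y)).comp (A y)) y := fun y =>
    ((hB.differentiable (by norm_num) (g y)).hasFDerivAt).comp y (hg1 y).hasFDerivAt
  have hB2g : ∀ y, HasFDerivAt (fun z => B₂ (g z)) ((B₃ (g y)).comp (A y)) y := fun y =>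
    ((hBB.differentiable (by norm_num) (g y)).hasFDerivAt).comp y (hg1 y).hasFDerivAt
  -- first derivative
  have h1 : ∀ y, HasFDerivAt (φ ∘ g) ((B (g y)).comp (A y)) y := fun y =>
    ((hφ1 (g y)).hasFDerivAt).comp y (hg1 y).hasFDerivAt
  have e1 : fderiv ℝ (φ ∘ g) = fun y => (B (g y)).comp (A y) := funext fun y => (h1 y).fderiv
  -- second derivative
  have h2 : ∀ y, HasFDerivAt (fun z => (B (g z)).comp (A z))
      ((compL ℝ E E ℝ (B (g y))).comp (A₂ y) +
        ((compL ℝ E E ℝ).flip (A y)).comp ((B₂ (g y)).comp (A y))) y := fun y =>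
    (hBg y).clm_comp (hA_at y)
  have e2 : fderiv ℝ (fderiv ℝ (φ ∘ g)) = fun y =>
      (compL ℝ E E ℝ (B (g y))).comp (A₂ y) +
        ((compL ℝ E E ℝ).flip (A y)).comp ((B₂ (g y)).comp (A y)) := by
    rw [e1]; exact funext fun y => (h2 y).fderiv
  -- third derivative
  have ht1 : ∀ y, HasFDerivAt (fun z => (compL ℝ E E ℝ (B (g z))).comp (A₂ z))
      ((compL ℝ E (E →L[ℝ] E) (E →L[ℝ] ℝ) (compL ℝ E E ℝ (B (g y)))).comp (A₃ y) +
        ((compL ℝ E (E →L[ℝ] E) (E →L[ℝ] ℝ)).flip (A₂ y)).comp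
          ((compL ℝ E E ℝ).comp ((B₂ (g y)).comp (A y)))) y := fun y =>
    HasFDerivAt.clm_comp ((compL ℝ E E ℝ).hasFDerivAt.comp y (hBg y)) (hA2_at y)
  have ht2 : ∀ y, HasFDerivAt
      (fun z => ((compL ℝ E E ℝ).flip (A z)).comp ((B₂ (g z)).comp (A z)))
      ((compL ℝ E (E →L[ℝ] ℝ) (E →L[ℝ] ℝ) ((compL ℝ E E ℝ).flip (A y))).comp
          ((compL ℝ E E (E →L[ℝ] ℝ) (B₂ (g y))).comp (A₂ y) +
            ((compL ℝ E E (E →L[ℝ] ℝ)).flip (A y)).comp ((B₃ (g y)).comp (A y))) +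
        ((compL ℝ E (E →L[ℝ] ℝ) (E →L[ℝ] ℝ)).flip ((B₂ (g y)).comp (A y))).comp
          (((compL ℝ E E ℝ).flip).comp (A₂ y))) y := fun y =>
    HasFDerivAt.clm_comp
      (((compL ℝ E E ℝ).flip).hasFDerivAt.comp y (hA_at y))
      (HasFDerivAt.clm_comp (hB2g y) (hA_at y))
  have e3 : fderiv ℝ (fderiv ℝ (fderiv ℝ (φ ∘ g))) x =
      ((compL ℝ E (E →L[ℝ] E) (E →L[ℝ] ℝ) (compL ℝ E E ℝ (B (g x)))).comp (A₃ x) +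
        ((compL ℝ E (E →L[ℝ] E) (E →L[ℝ] ℝ)).flip (A₂ x)).comp
          ((compL ℝ E E ℝ).comp ((B₂ (g x)).comp (A x)))) +
      ((compL ℝ E (E →L[ℝ] ℝ) (E →L[ℝ] ℝ) ((compL ℝ E E ℝ).flip (A x))).comp
          ((compL ℝ E E (E →L[ℝ] ℝ) (B₂ (g x))).comp (A₂ x) +
            ((compL ℝ E E (E →L[ℝ] ℝ)).flip (A x)).comp ((B₃ (g x)).comp (A x))) +
        ((compL ℝ E (E →L[ℝ] ℝ) (E →L[ℝ] ℝ)).flip ((B₂ (g x)).comp (A x))).comp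
          (((compL ℝ E E ℝ).flip).comp (A₂ x))) := by
    rw [e2]
    exact ((ht1 x).add (ht2 x)).fderiv
  have eA1 : ‖A x‖ = ‖iteratedFDeriv ℝ 1 g x‖ := norm_fd1 g x
  have eA2 : ‖A₂ x‖ = ‖iteratedFDeriv ℝ 2 g x‖ := norm_fd2 g x
  have eA3 : ‖A₃ x‖ = ‖iteratedFDeriv ℝ 3 g x‖ := norm_fd3 g x
  have eB1 : ‖B (g x)‖ = ‖iteratedFDeriv ℝ 1 φ (g x)‖ := norm_fd1 φ (g x)
  have eB2 : ‖B₂ (g x)‖ = ‖iteratedFDeriv ℝ 2 φ (g x)‖ := norm_fd2 φ (g x)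
  have eB3 : ‖B₃ (g x)‖ = ‖iteratedFDeriv ℝ 3 φ (g x)‖ := norm_fd3 φ (g x)
  refine ⟨?_, ?_, ?_⟩
  · calc ‖iteratedFDeriv ℝ 1 (φ ∘ g) x‖ = ‖fderiv ℝ (φ ∘ g) x‖ := (norm_fd1 _ x).symm
      _ = ‖(B (g x)).comp (A x)‖ := by rw [e1]
      _ ≤ ‖B (g x)‖ * ‖A x‖ := opNorm_comp_le _ _
      _ = _ := by rw [eA1, eB1]
  · rw [← norm_fd2 (φ ∘ g) x, congrFun e2 x, ← eA1, ← eA2, ← eB1, ← eB2]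
    have h1' : ‖(compL ℝ E E ℝ (B (g x))).comp (A₂ x)‖ ≤ ‖B (g x)‖ * ‖A₂ x‖ :=
      (opNorm_comp_le _ _).trans
        (mul_le_mul_of_nonneg_right (norm_compL_app _) (norm_nonneg _))
    have h2' : ‖((compL ℝ E E ℝ).flip (A x)).comp ((B₂ (g x)).comp (A x))‖ ≤
        ‖A x‖ * (‖B₂ (g x)‖ * ‖A x‖) :=
      (opNorm_comp_le _ _).trans
        (mul_le_mul (norm_compL_flip_app _) (opNorm_comp_le _ _) (norm_nonneg _) (norm_nonneg _))
    calc ‖(compL ℝ E E ℝ (B (g x))).comp (A₂ x) +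
        ((compL ℝ E E ℝ).flip (A x)).comp ((B₂ (g x)).comp (A x))‖
        ≤ ‖B (g x)‖ * ‖A₂ x‖ + ‖A x‖ * (‖B₂ (g x)‖ * ‖A x‖) :=
          (norm_add_le _ _).trans (add_le_add h1' h2')
      _ = ‖B₂ (g x)‖ * ‖A x‖ ^ 2 + ‖B (g x)‖ * ‖A₂ x‖ := by ring
  · rw [← norm_fd3 (φ ∘ g) x, e3, ← eA1, ← eA2, ← eA3, ← eB1, ← eB2, ← eB3]
    have hT1 : ‖(compL ℝ E (E →L[ℝ] E) (E →L[ℝ] ℝ) (compL ℝ E E ℝ (B (g x)))).comp (A₃ x)‖ ≤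
        ‖B (g x)‖ * ‖A₃ x‖ :=
      (opNorm_comp_le _ _).trans
        (mul_le_mul_of_nonneg_right ((norm_compL_app _).trans (norm_compL_app _)) (norm_nonneg _))
    have hT2 : ‖((compL ℝ E (E →L[ℝ] E) (E →L[ℝ] ℝ)).flip (A₂ x)).comp
        ((compL ℝ E E ℝ).comp ((B₂ (g x)).comp (A x)))‖ ≤
        ‖A₂ x‖ * (‖B₂ (g x)‖ * ‖A x‖) := by
      refine (opNorm_comp_le _ _).trans (mul_le_mul (norm_compL_flip_app _) ?_
        (norm_nonneg _) (norm_nonneg _))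
      refine (opNorm_comp_le _ _).trans ?_
      calc ‖compL ℝ E E ℝ‖ * ‖(B₂ (g x)).comp (A x)‖
          ≤ 1 * (‖B₂ (g x)‖ * ‖A x‖) := by
            refine mul_le_mul (norm_compL_le _ _ _ _) (opNorm_comp_le _ _) (norm_nonneg _)
              zero_le_one
        _ = ‖B₂ (g x)‖ * ‖A x‖ := one_mul _
    have hT3 : ‖(compL ℝ E (E →L[ℝ] ℝ) (E →L[ℝ] ℝ) ((compL ℝ E E ℝ).flip (A x))).comp
        ((compL ℝ E E (E →L[ℝ] ℝ) (B₂ (g x))).comp (A₂ x) +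
          ((compL ℝ E E (E →L[ℝ] ℝ)).flip (A x)).comp ((B₃ (g x)).comp (A x)))‖ ≤
        ‖A x‖ * (‖B₂ (g x)‖ * ‖A₂ x‖ + ‖A x‖ * (‖B₃ (g x)‖ * ‖A x‖)) := by
      refine (opNorm_comp_le _ _).trans (mul_le_mul
        ((norm_compL_app _).trans (norm_compL_flip_app _))
        ?_ (norm_nonneg _) (norm_nonneg _))
      refine (norm_add_le _ _).trans (add_le_add ?_ ?_)
      · exact (opNorm_comp_le _ _).trans
          (mul_le_mul_of_nonneg_right (norm_compL_app _) (norm_nonneg _))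
      · exact (opNorm_comp_le _ _).trans
          (mul_le_mul (norm_compL_flip_app _) (opNorm_comp_le _ _) (norm_nonneg _)
            (norm_nonneg _))
    have hT4 : ‖((compL ℝ E (E →L[ℝ] ℝ) (E →L[ℝ] ℝ)).flip ((B₂ (g x)).comp (A x))).comp
        (((compL ℝ E E ℝ).flip).comp (A₂ x))‖ ≤
        (‖B₂ (g x)‖ * ‖A x‖) * ‖A₂ x‖ := by
      refine (opNorm_comp_le _ _).trans (mul_le_mul
        ((norm_compL_flip_app _).trans (opNorm_comp_le _ _)) ?_ (norm_nonneg _)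
        (mul_nonneg (norm_nonneg _) (norm_nonneg _)))
      · refine (opNorm_comp_le _ _).trans ?_
        calc ‖(compL ℝ E E ℝ).flip‖ * ‖A₂ x‖ ≤ 1 * ‖A₂ x‖ := by
              rw [opNorm_flip]
              exact mul_le_mul_of_nonneg_right (norm_compL_le _ _ _ _) (norm_nonneg _)
          _ = ‖A₂ x‖ := one_mul _
    have := (norm_add_le _ _).trans (add_le_add
      ((norm_add_le _ _).trans (add_le_add hT1 hT2))
      ((norm_add_le _ _).trans (add_le_add hT3 hT4)))
    refine this.trans (le_of_eq ?_)
    ring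
end Core

section SupLayer
variable {E : Type*} [NormedAddCommGroup E] [NormedSpace ℝ E] {X : Set E}

private lemma supDerivOn_le {j : ℕ} {φ : E → ℝ} {C : ℝ} (hC : 0 ≤ C)
    (h : ∀ x ∈ X, ‖iteratedFDeriv ℝ j φ x‖ ≤ C) : supDerivOn X j φ ≤ C :=
  Real.iSup_le (fun x => Real.iSup_le (fun hx => h x hx) hC) hC

private lemma le_supDerivOn (hX : IsCompact X) {j : ℕ} {φ : E → ℝ}
    (hcont : Continuous (iteratedFDeriv ℝ j φ)) {x : E} (hx : x ∈ X) :
    ‖iteratedFDeriv ℝ j φ x‖ ≤ supDerivOn X j φ := by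
  obtain ⟨C, hC⟩ := hX.exists_bound_of_continuousOn hcont.continuousOn
  have hbdd : BddAbove (Set.range fun y => ⨆ _ : y ∈ X, ‖iteratedFDeriv ℝ j φ y‖) := by
    refine ⟨max C 0, ?_⟩
    rintro r ⟨y, rfl⟩
    show (⨆ _ : y ∈ X, ‖iteratedFDeriv ℝ j φ y‖) ≤ max C 0
    by_cases hy : y ∈ X
    · rw [ciSup_pos hy]; exact le_max_of_le_left (hC y hy)
    · haveI : IsEmpty (y ∈ X) := ⟨hy⟩
      rw [Real.iSup_of_isEmpty]
      exact le_max_right _ _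
  calc ‖iteratedFDeriv ℝ j φ x‖ = ⨆ _ : x ∈ X, ‖iteratedFDeriv ℝ j φ x‖ :=
        (ciSup_pos (f := fun _ : x ∈ X => ‖iteratedFDeriv ℝ j φ x‖) hx).symm
    _ ≤ supDerivOn X j φ := le_ciSup hbdd x

private lemma supDerivOn_nonneg (hX : IsCompact X) (hne : X.Nonempty) {j : ℕ} {φ : E → ℝ}
    (hcont : Continuous (iteratedFDeriv ℝ j φ)) : 0 ≤ supDerivOn X j φ :=
  let ⟨x, hx⟩ := hne
  (norm_nonneg _).trans (le_supDerivOn hX hcont hx)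

private lemma N3_index_nonempty (X : Set E) :
    Nonempty {φ : E → ℝ // ContDiff ℝ 3 φ ∧
      supDerivOn X 1 φ + supDerivOn X 2 φ + supDerivOn X 3 φ ≤ 1} := by
  refine ⟨⟨fun _ => 0, contDiff_const, ?_⟩⟩
  have h : ∀ j : ℕ, j ≠ 0 → supDerivOn X j (fun _ : E => (0 : ℝ)) ≤ 0 := fun j hj =>
    supDerivOn_le le_rfl (fun x _ => by rw [iteratedFDeriv_const_of_ne hj]; simp)
  linarith [h 1 one_ne_zero, h 2 two_ne_zero, h 3 three_ne_zero]

end SupLayer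

section MeasLayer
variable {E : Type*} [NormedAddCommGroup E] [NormedSpace ℝ E]
  [MeasurableSpace E] [BorelSpace E] {X : Set E}

private lemma ae_mem_of_compl_zero {μ : Measure E} (h : μ Xᶜ = 0) : ∀ᵐ x ∂μ, x ∈ X := by
  rw [ae_iff]
  simpa [Set.compl_def] using h

private lemma integrable_of_conc (hX : IsCompact X) {f : E → ℝ} (hf : Continuous f)
    {μ : Measure E} [IsFiniteMeasure μ] (hμX : μ Xᶜ = 0) : Integrable f μ := by
  obtain ⟨C, hC⟩ := hX.exists_bound_of_continuousOn hf.continuousOn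
  exact (integrable_const C).mono' hf.aestronglyMeasurable
    ((ae_mem_of_compl_zero hμX).mono fun x hx => hC x hx)

set_option linter.unusedVariables false in
private lemma N3_bddAbove (hXcpt : IsCompact X) (hXconv : Convex ℝ X) (hXne : X.Nonempty)
    {σ σ' : Measure E} [IsProbabilityMeasure σ] [IsProbabilityMeasure σ']
    (hσX : σ Xᶜ = 0) (hσ'X : σ' Xᶜ = 0) :
    BddAbove (Set.range fun φ : {φ : E → ℝ // ContDiff ℝ 3 φ ∧
        supDerivOn X 1 φ + supDerivOn X 2 φ + supDerivOn X 3 φ ≤ 1} =>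
      (∫ x, φ.1 x ∂σ) - ∫ x, φ.1 x ∂σ') := by
  obtain ⟨x₀, hx₀⟩ := hXne
  refine ⟨2 * Metric.diam X, ?_⟩
  rintro r ⟨⟨φ, hφ3, hφs⟩, rfl⟩
  have hc1 : Continuous (iteratedFDeriv ℝ 1 φ) :=
    hφ3.continuous_iteratedFDeriv (by norm_num)
  have hc2 : Continuous (iteratedFDeriv ℝ 2 φ) :=
    hφ3.continuous_iteratedFDeriv (by norm_num)
  have hc3 : Continuous (iteratedFDeriv ℝ 3 φ) :=
    hφ3.continuous_iteratedFDeriv (by norm_num)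
  have hs1 : supDerivOn X 1 φ ≤ 1 := by
    have h2 := supDerivOn_nonneg hXcpt ⟨x₀, hx₀⟩ hc2
    have h3 := supDerivOn_nonneg hXcpt ⟨x₀, hx₀⟩ hc3
    linarith
  have hfd : ∀ x ∈ X, ‖fderiv ℝ φ x‖ ≤ 1 := fun x hx => by
    rw [norm_fd1]
    exact (le_supDerivOn hXcpt hc1 hx).trans hs1
  have key : ∀ x ∈ X, ‖φ x - φ x₀‖ ≤ Metric.diam X := fun x hx => by
    calc ‖φ x - φ x₀‖ ≤ 1 * ‖x - x₀‖ :=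
          hXconv.norm_image_sub_le_of_norm_fderiv_le
            (fun y _ => hφ3.differentiable (by norm_num) y) hfd hx₀ hx
      _ = dist x x₀ := by rw [one_mul, dist_eq_norm]
      _ ≤ Metric.diam X := Metric.dist_le_diam_of_mem hXcpt.isBounded hx hx₀
  have hφc : Continuous φ := hφ3.continuous
  have hint : Integrable φ σ := integrable_of_conc hXcpt hφc hσX
  have hint' : Integrable φ σ' := integrable_of_conc hXcpt hφc hσ'X
  have hb : ∀ (τ : Measure E), IsProbabilityMeasure τ → τ Xᶜ = 0 →
      ‖∫ x, (φ x - φ x₀) ∂τ‖ ≤ Metric.diam X := by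
    intro τ hτ hτX
    haveI := hτ
    refine (norm_integral_le_of_norm_le (integrable_const (Metric.diam X))
      ((ae_mem_of_compl_zero hτX).mono fun x hx => key x hx)).trans ?_
    simp [integral_const]
  have e1 : ∫ x, (φ x - φ x₀) ∂σ = (∫ x, φ x ∂σ) - φ x₀ := by
    rw [integral_sub hint (integrable_const _), integral_const]; simp
  have e2 : ∫ x, (φ x - φ x₀) ∂σ' = (∫ x, φ x ∂σ') - φ x₀ := by
    rw [integral_sub hint' (integrable_const _), integral_const]; simp
  have h1 := hb σ ‹_› hσX
  have h2 := hb σ' ‹_› hσ'X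
  rw [e1] at h1; rw [e2] at h2
  rw [Real.norm_eq_abs, abs_le] at h1 h2
  simp only
  linarith [h1.2, h2.1]

end MeasLayer

/-- Contraction of the sectional transfer operator on the `C³`-dual distance `N₃`: if
the `C³` fibre maps preserve the compact convex set `X ⊆ ℝ^d` and their derivative
bounds `L₁, L₂, L₃` on `X` satisfy `max{L₁+L₂+L₃, L₁²+3L₁L₂, L₁³} ≤ λ < 1`, then
`N₃(σ_θ, σ′_θ) ≤ D` for all `θ` implies `N₃((Kσ)_ω, (Kσ′)_ω) ≤ λ·D` for all `ω`. -/
theorem sectionalTransfer_N3_contraction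
    {d : ℕ} (X : Set (EuclideanSpace ℝ (Fin d)))
    (hXcpt : IsCompact X) (hXconv : Convex ℝ X) (hXne : X.Nonempty)
    {Ω I : Type*} [Countable I]
    (θ : I → Ω → Ω) (p : I → Ω → ℝ)
    (hp0 : ∀ i ω, 0 ≤ p i ω) (hp1 : ∀ ω, ∑' i, p i ω = 1)
    (g : Ω → EuclideanSpace ℝ (Fin d) → EuclideanSpace ℝ (Fin d))
    (hg3 : ∀ ω, ContDiff ℝ 3 (g ω)) (hgX : ∀ ω, Set.MapsTo (g ω) X X)
    (L₁ L₂ L₃ lam : ℝ) (hlam0 : 0 ≤ lam) (hlam1 : lam < 1)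
    (hL₁ : ∀ ω, ∀ x ∈ X, ‖iteratedFDeriv ℝ 1 (g ω) x‖ ≤ L₁)
    (hL₂ : ∀ ω, ∀ x ∈ X, ‖iteratedFDeriv ℝ 2 (g ω) x‖ ≤ L₂)
    (hL₃ : ∀ ω, ∀ x ∈ X, ‖iteratedFDeriv ℝ 3 (g ω) x‖ ≤ L₃)
    (hmax : max (L₁ + L₂ + L₃) (max (L₁ ^ 2 + 3 * L₁ * L₂) (L₁ ^ 3)) ≤ lam)
    (σ σ' : Ω → Measure (EuclideanSpace ℝ (Fin d)))
    (hσp : ∀ ω, IsProbabilityMeasure (σ ω)) (hσ'p : ∀ ω, IsProbabilityMeasure (σ' ω))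
    (hσX : ∀ ω, σ ω Xᶜ = 0) (hσ'X : ∀ ω, σ' ω Xᶜ = 0)
    (D : ℝ) (hD : 0 ≤ D)
    (hND : ∀ ϑ : Ω, N3 X (σ ϑ) (σ' ϑ) ≤ D) :
    ∀ ω : Ω,
      N3 X (sectionalTransfer θ p g σ ω) (sectionalTransfer θ p g σ' ω) ≤ lam * D := by

  intro ω
  classical
  obtain ⟨x₀, hx₀⟩ := hXne
  have hL1n : 0 ≤ L₁ := (norm_nonneg _).trans (hL₁ ω x₀ hx₀)
  have hL2n : 0 ≤ L₂ := (norm_nonneg _).trans (hL₂ ω x₀ hx₀)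
  have hL3n : 0 ≤ L₃ := (norm_nonneg _).trans (hL₃ ω x₀ hx₀)
  have hmax1 : L₁ + L₂ + L₃ ≤ lam := (le_max_left _ _).trans hmax
  have hmax2 : L₁ ^ 2 + 3 * L₁ * L₂ ≤ lam :=
    ((le_max_left _ _).trans (le_max_right _ _)).trans hmax
  have hmax3 : L₁ ^ 3 ≤ lam := ((le_max_right _ _).trans (le_max_right _ _)).trans hmax
  have hgm : ∀ ϑ, Measurable (g ϑ) := fun ϑ => (hg3 ϑ).continuous.measurable
  have hXm : MeasurableSet X := hXcpt.isClosed.measurableSet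
  have hps : Summable fun i => p i ω := by
    by_contra h
    have h1 := hp1 ω
    rw [tsum_eq_zero_of_not_summable h] at h1
    norm_num at h1
  have hmapX : ∀ ϑ (ν : Measure (EuclideanSpace ℝ (Fin d))), ν Xᶜ = 0 →
      (ν.map (g ϑ)) Xᶜ = 0 := by
    intro ϑ ν h
    rw [Measure.map_apply (hgm ϑ) hXm.compl]
    exact le_antisymm
      (le_trans (measure_mono fun x hxp hxX => hxp (hgX ϑ hxX)) h.le) zero_le
  have key : ∀ τ : Ω → Measure (EuclideanSpace ℝ (Fin d)),
      (∀ ϑ, IsProbabilityMeasure (τ ϑ)) → (∀ ϑ, τ ϑ Xᶜ = 0) →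
      (sectionalTransfer θ p g τ ω) Xᶜ = 0 ∧
      IsProbabilityMeasure (sectionalTransfer θ p g τ ω) ∧
      ∀ φ : EuclideanSpace ℝ (Fin d) → ℝ, Continuous φ →
        ∫ x, φ x ∂(sectionalTransfer θ p g τ ω) =
          ∑' i, p i ω * ∫ x, φ (g (θ i ω) x) ∂(τ (θ i ω)) := by
    intro τ hτp hτX
    haveI := hτp
    have hconc : (sectionalTransfer θ p g τ ω) Xᶜ = 0 := by
      rw [sectionalTransfer, Measure.sum_apply _ hXm.compl]
      simp [Measure.smul_apply, hmapX _ _ (hτX _)]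
    have huniv : (sectionalTransfer θ p g τ ω) Set.univ = 1 := by
      rw [sectionalTransfer, Measure.sum_apply _ MeasurableSet.univ]
      have hh : ∀ i : I, (ENNReal.ofReal (p i ω) • ((τ (θ i ω)).map (g (θ i ω)))) Set.univ
          = ENNReal.ofReal (p i ω) := by
        intro i
        haveI := Measure.isProbabilityMeasure_map ((hgm (θ i ω)).aemeasurable (μ := τ (θ i ω)))
        simp [Measure.smul_apply]
      rw [tsum_congr hh, ← ENNReal.ofReal_tsum_of_nonneg (fun i => hp0 i ω) hps, hp1 ω]
      simp
    haveI hKP : IsProbabilityMeasure (sectionalTransfer θ p g τ ω) := ⟨huniv⟩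
    refine ⟨hconc, hKP, ?_⟩
    intro φ hφc
    have hint : Integrable φ (sectionalTransfer θ p g τ ω) :=
      integrable_of_conc hXcpt hφc hconc
    rw [sectionalTransfer] at hint ⊢
    rw [integral_sum_measure hint]
    refine tsum_congr fun i => ?_
    rw [integral_smul_measure, ENNReal.toReal_ofReal (hp0 i ω),
      integral_map ((hgm (θ i ω)).aemeasurable) hφc.aestronglyMeasurable]
    simp [smul_eq_mul]
  have perθ : ∀ φ : EuclideanSpace ℝ (Fin d) → ℝ, ContDiff ℝ 3 φ →
      supDerivOn X 1 φ + supDerivOn X 2 φ + supDerivOn X 3 φ ≤ 1 → ∀ ϑ,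
      (∫ x, φ (g ϑ x) ∂(σ ϑ)) - (∫ x, φ (g ϑ x) ∂(σ' ϑ)) ≤ lam * D := by
    intro φ hφ3 hφs ϑ
    have hc1 : Continuous (iteratedFDeriv ℝ 1 φ) := hφ3.continuous_iteratedFDeriv (by norm_num)
    have hc2 : Continuous (iteratedFDeriv ℝ 2 φ) := hφ3.continuous_iteratedFDeriv (by norm_num)
    have hc3 : Continuous (iteratedFDeriv ℝ 3 φ) := hφ3.continuous_iteratedFDeriv (by norm_num)
    set S1 := supDerivOn X 1 φ with hS1
    set S2 := supDerivOn X 2 φ with hS2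
    set S3 := supDerivOn X 3 φ with hS3
    have hS1n : 0 ≤ S1 := supDerivOn_nonneg hXcpt ⟨x₀, hx₀⟩ hc1
    have hS2n : 0 ≤ S2 := supDerivOn_nonneg hXcpt ⟨x₀, hx₀⟩ hc2
    have hS3n : 0 ≤ S3 := supDerivOn_nonneg hXcpt ⟨x₀, hx₀⟩ hc3
    have hcomp3 : ContDiff ℝ 3 (φ ∘ g ϑ) := hφ3.comp (hg3 ϑ)
    have pb : ∀ x ∈ X,
        ‖iteratedFDeriv ℝ 1 (φ ∘ g ϑ) x‖ ≤ S1 * L₁ ∧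
        ‖iteratedFDeriv ℝ 2 (φ ∘ g ϑ) x‖ ≤ S2 * L₁ ^ 2 + S1 * L₂ ∧
        ‖iteratedFDeriv ℝ 3 (φ ∘ g ϑ) x‖ ≤ S3 * L₁ ^ 3 + 3 * S2 * L₁ * L₂ + S1 * L₃ := by
      intro x hx
      obtain ⟨b1, b2, b3⟩ := comp_deriv_bounds φ (g ϑ) hφ3 (hg3 ϑ) x
      have hgx : g ϑ x ∈ X := hgX ϑ hx
      have e1 : ‖iteratedFDeriv ℝ 1 φ (g ϑ x)‖ ≤ S1 := le_supDerivOn hXcpt hc1 hgx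
      have e2 : ‖iteratedFDeriv ℝ 2 φ (g ϑ x)‖ ≤ S2 := le_supDerivOn hXcpt hc2 hgx
      have e3 : ‖iteratedFDeriv ℝ 3 φ (g ϑ x)‖ ≤ S3 := le_supDerivOn hXcpt hc3 hgx
      have f1 : ‖iteratedFDeriv ℝ 1 (g ϑ) x‖ ≤ L₁ := hL₁ ϑ x hx
      have f2 : ‖iteratedFDeriv ℝ 2 (g ϑ) x‖ ≤ L₂ := hL₂ ϑ x hx
      have f3 : ‖iteratedFDeriv ℝ 3 (g ϑ) x‖ ≤ L₃ := hL₃ ϑ x hx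
      have t1 : ‖iteratedFDeriv ℝ 1 φ (g ϑ x)‖ * ‖iteratedFDeriv ℝ 1 (g ϑ) x‖ ≤ S1 * L₁ :=
        mul_le_mul e1 f1 (norm_nonneg _) hS1n
      have t2 : ‖iteratedFDeriv ℝ 2 φ (g ϑ x)‖ * ‖iteratedFDeriv ℝ 1 (g ϑ) x‖ ^ 2 ≤
          S2 * L₁ ^ 2 :=
        mul_le_mul e2 (pow_le_pow_left₀ (norm_nonneg _) f1 2) (by positivity) hS2n
      have t3 : ‖iteratedFDeriv ℝ 1 φ (g ϑ x)‖ * ‖iteratedFDeriv ℝ 2 (g ϑ) x‖ ≤ S1 * L₂ :=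
        mul_le_mul e1 f2 (norm_nonneg _) hS1n
      have t4 : ‖iteratedFDeriv ℝ 3 φ (g ϑ x)‖ * ‖iteratedFDeriv ℝ 1 (g ϑ) x‖ ^ 3 ≤
          S3 * L₁ ^ 3 :=
        mul_le_mul e3 (pow_le_pow_left₀ (norm_nonneg _) f1 3) (by positivity) hS3n
      have t5 : ‖iteratedFDeriv ℝ 2 φ (g ϑ x)‖ *
          (‖iteratedFDeriv ℝ 1 (g ϑ) x‖ * ‖iteratedFDeriv ℝ 2 (g ϑ) x‖) ≤ S2 * (L₁ * L₂) :=
        mul_le_mul e2 (mul_le_mul f1 f2 (norm_nonneg _) hL1n) (by positivity) hS2n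
      have t6 : ‖iteratedFDeriv ℝ 1 φ (g ϑ x)‖ * ‖iteratedFDeriv ℝ 3 (g ϑ) x‖ ≤ S1 * L₃ :=
        mul_le_mul e1 f3 (norm_nonneg _) hS1n
      exact ⟨b1.trans t1, b2.trans (add_le_add t2 t3),
        b3.trans (by nlinarith [t4, t5, t6])⟩
    have hεD : ∀ ε : ℝ, 0 < ε →
        (∫ x, φ (g ϑ x) ∂(σ ϑ)) - (∫ x, φ (g ϑ x) ∂(σ' ϑ)) ≤ (lam + ε) * D := by
      intro ε hε
      have hlamε : 0 < lam + ε := by linarith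
      set c : ℝ := (lam + ε)⁻¹ with hc
      have hc0 : 0 ≤ c := by positivity
      set ψ : EuclideanSpace ℝ (Fin d) → ℝ := c • (φ ∘ g ϑ) with hψ
      have hψ3 : ContDiff ℝ 3 ψ := hcomp3.const_smul c
      have hψd : ∀ j : ℕ, (j : WithTop ℕ∞) ≤ 3 → ∀ x, ‖iteratedFDeriv ℝ j ψ x‖ =
          c * ‖iteratedFDeriv ℝ j (φ ∘ g ϑ) x‖ := by
        intro j hj x
        rw [hψ, iteratedFDeriv_const_smul_apply (hcomp3.of_le hj).contDiffAt, norm_smul,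
          Real.norm_eq_abs, abs_of_nonneg hc0]
      have u1 : supDerivOn X 1 ψ ≤ c * (S1 * L₁) :=
        supDerivOn_le (by positivity) fun x hx => by
          rw [hψd 1 (by norm_num) x]
          exact mul_le_mul_of_nonneg_left (pb x hx).1 hc0
      have u2 : supDerivOn X 2 ψ ≤ c * (S2 * L₁ ^ 2 + S1 * L₂) :=
        supDerivOn_le (by positivity) fun x hx => by
          rw [hψd 2 (by norm_num) x]
          exact mul_le_mul_of_nonneg_left (pb x hx).2.1 hc0
      have u3 : supDerivOn X 3 ψ ≤ c * (S3 * L₁ ^ 3 + 3 * S2 * L₁ * L₂ + S1 * L₃) :=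
        supDerivOn_le (by positivity) fun x hx => by
          rw [hψd 3 (by norm_num) x]
          exact mul_le_mul_of_nonneg_left (pb x hx).2.2 hc0
      have htot : S1 * L₁ + (S2 * L₁ ^ 2 + S1 * L₂) +
          (S3 * L₁ ^ 3 + 3 * S2 * L₁ * L₂ + S1 * L₃) ≤ lam := by
        nlinarith [mul_le_mul_of_nonneg_left hmax1 hS1n, mul_le_mul_of_nonneg_left hmax2 hS2n,
          mul_le_mul_of_nonneg_left hmax3 hS3n, mul_le_mul_of_nonneg_right hφs hlam0]
      have hsup : supDerivOn X 1 ψ + supDerivOn X 2 ψ + supDerivOn X 3 ψ ≤ 1 := by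
        calc supDerivOn X 1 ψ + supDerivOn X 2 ψ + supDerivOn X 3 ψ
            ≤ c * (S1 * L₁) + c * (S2 * L₁ ^ 2 + S1 * L₂) +
              c * (S3 * L₁ ^ 3 + 3 * S2 * L₁ * L₂ + S1 * L₃) :=
              add_le_add (add_le_add u1 u2) u3
          _ = c * (S1 * L₁ + (S2 * L₁ ^ 2 + S1 * L₂) +
              (S3 * L₁ ^ 3 + 3 * S2 * L₁ * L₂ + S1 * L₃)) := by ring
          _ ≤ c * lam := mul_le_mul_of_nonneg_left htot hc0
          _ ≤ 1 := by
              rw [hc, ← div_eq_inv_mul]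
              exact div_le_one_of_le₀ (by linarith) hlamε.le
      haveI := hσp ϑ; haveI := hσ'p ϑ
      have hble := N3_bddAbove hXcpt hXconv ⟨x₀, hx₀⟩ (hσX ϑ) (hσ'X ϑ)
      have hle : (∫ x, ψ x ∂(σ ϑ)) - (∫ x, ψ x ∂(σ' ϑ)) ≤ N3 X (σ ϑ) (σ' ϑ) :=
        le_ciSup hble ⟨ψ, hψ3, hsup⟩
      have hψint : ∀ m : Measure (EuclideanSpace ℝ (Fin d)),
          (∫ x, ψ x ∂m) = c * ∫ x, φ (g ϑ x) ∂m := fun m => by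
        rw [hψ]
        simpa using integral_smul c (fun x => φ (g ϑ x)) (μ := m)
      have hDle := hle.trans (hND ϑ)
      rw [hψint, hψint] at hDle
      have heq : (∫ x, φ (g ϑ x) ∂(σ ϑ)) - (∫ x, φ (g ϑ x) ∂(σ' ϑ)) =
          (lam + ε) * ((c * ∫ x, φ (g ϑ x) ∂(σ ϑ)) - c * ∫ x, φ (g ϑ x) ∂(σ' ϑ)) := by
        rw [hc]; field_simp
      rw [heq]
      exact mul_le_mul_of_nonneg_left hDle hlamε.le
    rcases eq_or_lt_of_le hD with hD0 | hDpos
    · have h1 := hεD 1 one_pos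
      rw [← hD0] at h1 ⊢
      simpa using h1
    · refine le_of_forall_pos_le_add fun δ hδ => ?_
      refine (hεD (δ / D) (div_pos hδ hDpos)).trans (le_of_eq ?_)
      field_simp
  haveI := N3_index_nonempty (E := EuclideanSpace ℝ (Fin d)) X
  obtain ⟨hconcσ, hPσ, hIσ⟩ := key σ hσp hσX
  obtain ⟨hconcσ', hPσ', hIσ'⟩ := key σ' hσ'p hσ'X
  unfold N3
  refine ciSup_le ?_
  rintro ⟨φ, hφ3, hφs⟩
  have hφc : Continuous φ := hφ3.continuous
  simp only
  rw [hIσ φ hφc, hIσ' φ hφc]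
  obtain ⟨C, hC⟩ := hXcpt.exists_bound_of_continuousOn hφc.continuousOn
  have habs : ∀ ϑ (τ : Measure (EuclideanSpace ℝ (Fin d))), IsProbabilityMeasure τ →
      τ Xᶜ = 0 → ‖∫ x, φ (g ϑ x) ∂τ‖ ≤ C := by
    intro ϑ τ hτ hτX
    haveI := hτ
    refine (norm_integral_le_of_norm_le (integrable_const C)
      ((ae_mem_of_compl_zero hτX).mono fun x hx => hC _ (hgX ϑ hx))).trans ?_
    simp [integral_const]
  have ha : Summable fun i => p i ω * ∫ x, φ (g (θ i ω) x) ∂(σ (θ i ω)) := by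
    refine Summable.of_norm_bounded (hps.mul_right C) fun i => ?_
    rw [norm_mul, Real.norm_eq_abs, abs_of_nonneg (hp0 i ω)]
    exact mul_le_mul_of_nonneg_left (habs (θ i ω) _ (hσp _) (hσX _)) (hp0 i ω)
  have hb : Summable fun i => p i ω * ∫ x, φ (g (θ i ω) x) ∂(σ' (θ i ω)) := by
    refine Summable.of_norm_bounded (hps.mul_right C) fun i => ?_
    rw [norm_mul, Real.norm_eq_abs, abs_of_nonneg (hp0 i ω)]
    exact mul_le_mul_of_nonneg_left (habs (θ i ω) _ (hσ'p _) (hσ'X _)) (hp0 i ω)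
  rw [← (ha.hasSum.sub hb.hasSum).tsum_eq]
  refine ((ha.sub hb).tsum_le_tsum (fun i => ?_) (hps.mul_right (lam * D))).trans ?_
  · rw [← mul_sub]
    exact mul_le_mul_of_nonneg_left (perθ φ hφ3 hφs (θ i ω)) (hp0 i ω)
  · rw [tsum_mul_right, hp1 ω, one_mul]
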